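/- The element f lies in the second symbolic power 𝔭^{(2)}. -/
import Mathlib


open MvPolynomial

noncomputable def curveMap (k : Type*) [Field k] (q m : ℕ) :
    MvPolynomial (Fin 4) k →ₐ[k] MvPolynomial (Fin 2) k :=
  aeval ![X 0 ^ (2*q+1+2*m), X 0 ^ (2*q+1+m) * X 1 ^ m, X 0 ^ (2*q+1) * X 1 ^ (2*m),
    X 1 ^ (2*q+1+2*m)]

noncomputable def curveIdeal (k : Type*) [Field k] (q m : ℕ) : Ideal (MvPolynomial (Fin 4) k) :=
  RingHom.ker (curveMap k q m)

instance (k : Type*) [Field k] (q m : ℕ) : (curveIdeal k q m).IsPrime :=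
  RingHom.ker_isPrime _

noncomputable def symbPow (k : Type*) [Field k] (q m n : ℕ) :
    Ideal (MvPolynomial (Fin 4) k) :=
  (Ideal.map (algebraMap _ (Localization.AtPrime (curveIdeal k q m)))
      ((curveIdeal k q m) ^ n)).comap
    (algebraMap _ (Localization.AtPrime (curveIdeal k q m)))

noncomputable def fPoly (k : Type*) [Field k] (q m : ℕ) : MvPolynomial (Fin 4) k :=
  - X 2 ^ (2*(q+m)+1) - X 0 ^ (q-1) * X 1 ^ 3 * X 2 ^ (q+m-1) * X 3 ^ m
    + 3 * X 0 ^ q * X 1 * X 2 ^ (q+m) * X 3 ^ m - X 0 ^ (2*q+1) * X 3 ^ (2*m)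

noncomputable def moduleLength (R M : Type*) [Ring R] [AddCommGroup M] [Module R M] :
    WithBot ℕ∞ :=
  Order.krullDim (Submodule R M)

/-- `g₂ = x₂ x₃^{q+m} - x₁^{q+1} x₄^m` lies in the curve ideal. -/
lemma g2_mem (k : Type*) [Field k] (q m : ℕ) :
    (X 1 * X 2 ^ (q+m) - X 0 ^ (q+1) * X 3 ^ m : MvPolynomial (Fin 4) k)
      ∈ curveIdeal k q m := by
  show curveMap k q m _ = 0
  simp only [curveMap, map_sub, map_mul, map_pow, aeval_X]
  simp only [Matrix.cons_val_zero, Matrix.cons_val_one, Matrix.head_cons,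
    Matrix.cons_val_two, Matrix.tail_cons, Matrix.cons_val_three]
  rw [sub_eq_zero]
  simp only [mul_pow, ← pow_mul]
  ring

/-- `g₃ = x₃^{q+m+1} - x₁^q x₂ x₄^m` lies in the curve ideal. -/
lemma g3_mem (k : Type*) [Field k] (q m : ℕ) :
    (X 2 ^ (q+m+1) - X 0 ^ q * X 1 * X 3 ^ m : MvPolynomial (Fin 4) k)
      ∈ curveIdeal k q m := by
  show curveMap k q m _ = 0
  simp only [curveMap, map_sub, map_mul, map_pow, aeval_X]
  simp only [Matrix.cons_val_zero, Matrix.cons_val_one, Matrix.head_cons,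
    Matrix.cons_val_two, Matrix.tail_cons, Matrix.cons_val_three]
  rw [sub_eq_zero]
  simp only [mul_pow, ← pow_mul]
  ring

/-- `g₁ = x₁ x₃ - x₂²` lies in the curve ideal. -/
lemma g1_mem (k : Type*) [Field k] (q m : ℕ) :
    (X 0 * X 2 - X 1 ^ 2 : MvPolynomial (Fin 4) k) ∈ curveIdeal k q m := by
  show curveMap k q m _ = 0
  simp only [curveMap, map_sub, map_mul, map_pow, aeval_X]
  simp only [Matrix.cons_val_zero, Matrix.cons_val_one, Matrix.head_cons,
    Matrix.cons_val_two, Matrix.tail_cons, Matrix.cons_val_three]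
  rw [sub_eq_zero]
  simp only [mul_pow, ← pow_mul]
  ring

/-- `x₁ ∉ 𝔭`. -/
lemma X0_not_mem (k : Type*) [Field k] (q m : ℕ) :
    (X 0 : MvPolynomial (Fin 4) k) ∉ curveIdeal k q m := by
  intro h
  have h0 : curveMap k q m (X 0) = 0 := h
  simp only [curveMap, aeval_X, Matrix.cons_val_zero] at h0
  exact pow_ne_zero _ (X_ne_zero (R := k) (0 : Fin 2)) h0

/-- The element `f` lies in the second symbolic power `𝔭⁽²⁾`. -/
theorem statement3 (k : Type*) [Field k] (q m : ℕ) (hq : 1 ≤ q) (hm : 1 ≤ m)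
    (hco : Nat.Coprime (2*q+1) m) :
    fPoly k q m ∈ symbPow k q m 2 := by
  obtain ⟨q', rfl⟩ : ∃ q'', q = q'' + 1 := ⟨q - 1, by omega⟩
  set p := curveIdeal k (q' + 1) m with hp
  set S := Localization.AtPrime p with hS
  -- the key polynomial identity
  have hid : (X 0 : MvPolynomial (Fin 4) k) * fPoly k (q' + 1) m =
      (-(X 1 * X 2 ^ (q'+1+m) - X 0 ^ (q'+1+1) * X 3 ^ m)) *
        (X 1 * X 2 ^ (q'+1+m) - X 0 ^ (q'+1+1) * X 3 ^ m)
      + (-(X 2 ^ (q'+m) * (X 2 ^ (q'+1+m+1) - X 0 ^ (q'+1) * X 1 * X 3 ^ m))) *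
        (X 0 * X 2 - X 1 ^ 2) := by
    simp only [fPoly]
    rw [show q' + 1 - 1 = q' by omega, show q' + 1 + m - 1 = q' + m by omega]
    ring
  -- hence x₁ · f ∈ 𝔭²
  have hmem : (X 0 : MvPolynomial (Fin 4) k) * fPoly k (q' + 1) m ∈ p ^ 2 := by
    rw [hid, pow_two]
    refine Ideal.add_mem _ ?_ ?_
    · exact Ideal.mul_mem_mul (neg_mem (g2_mem k (q'+1) m)) (g2_mem k (q'+1) m)
    · exact Ideal.mul_mem_mul (neg_mem (Ideal.mul_mem_left _ _ (g3_mem k (q'+1) m)))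
        (g1_mem k (q'+1) m)
  -- x₁ is a unit in the localization
  have hu : IsUnit (algebraMap (MvPolynomial (Fin 4) k) S (X 0)) :=
    IsLocalization.map_units S (⟨X 0, X0_not_mem k (q'+1) m⟩ : p.primeCompl)
  -- conclude
  rw [symbPow, Ideal.mem_comap]
  have h1 : algebraMap (MvPolynomial (Fin 4) k) S (X 0) *
      algebraMap (MvPolynomial (Fin 4) k) S (fPoly k (q'+1) m) ∈
      Ideal.map (algebraMap (MvPolynomial (Fin 4) k) S) (p ^ 2) := by
    rw [← map_mul]
    exact Ideal.mem_map_of_mem _ hmem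
  have h2 := Ideal.mul_mem_left _ (↑hu.unit⁻¹) h1
  rwa [← mul_assoc, IsUnit.val_inv_mul, one_mul] at h2
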